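/- Let j, k, r, s be non-negative integers and let y, z be primitive elements of Mat_2(Z_p) with v_p(det y) ≥ r and v_p(det z) ≥ s. Write I_{y,N} for the unique left ideal of norm p^N containing y (for N ≤ v_p(det y)), and similarly I_{z,N}. Then p^j·I_{y,r} ⊆ p^k·I_{z,s} if and only if r ≥ s − j + k, s ≥ s − j + k (i.e., j ≥ k), and, when s − j + k ≥ 0, I_{y,s−j+k} = I_{z,s−j+k}. -/

import Mathlib

open Matrix

/-- A matrix over `ℤ_p` is primitive if it is not in `p·Mat₂(ℤ_p)`. -/
def PrimitiveMat (p : ℕ) [Fact p.Prime] (g : Matrix (Fin 2) (Fin 2) ℤ_[p]) : Prop :=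
  ∃ i j, ¬ (p : ℤ_[p]) ∣ g i j

/-- A left ideal of `Mat₂(ℤ_p)` has norm `p^N` if it is generated by an element whose
determinant (reduced norm) has valuation `N`. -/
def hasNorm (p : ℕ) [Fact p.Prime] (I : Ideal (Matrix (Fin 2) (Fin 2) ℤ_[p])) (N : ℕ) : Prop :=
  ∃ g : Matrix (Fin 2) (Fin 2) ℤ_[p], I = Ideal.span {g} ∧ ‖g.det‖ = (p : ℝ) ^ (-(N : ℤ))

namespace Stmt5Aux

variable {p : ℕ} [Fact p.Prime]

/-- diag(1, p^N) -/
noncomputable def dd (p : ℕ) [Fact p.Prime] (N : ℕ) : Matrix (Fin 2) (Fin 2) ℤ_[p] :=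
  !![1, 0; 0, (p : ℤ_[p])^N]

lemma dd_mul_apply00 (N : ℕ) (m : Matrix (Fin 2) (Fin 2) ℤ_[p]) (jj : Fin 2) :
    (dd p N * m) 0 jj = m 0 jj := by
  simp [dd, Matrix.mul_apply, Fin.sum_univ_two]

lemma dd_mul_apply1 (N : ℕ) (m : Matrix (Fin 2) (Fin 2) ℤ_[p]) (jj : Fin 2) :
    (dd p N * m) 1 jj = (p : ℤ_[p])^N * m 1 jj := by
  simp [dd, Matrix.mul_apply, Fin.sum_univ_two]

lemma mul_dd_apply0 (N : ℕ) (c : Matrix (Fin 2) (Fin 2) ℤ_[p]) (i : Fin 2) :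
    (c * dd p N) i 0 = c i 0 := by
  simp [dd, Matrix.mul_apply, Fin.sum_univ_two]

lemma mul_dd_apply1 (N : ℕ) (c : Matrix (Fin 2) (Fin 2) ℤ_[p]) (i : Fin 2) :
    (c * dd p N) i 1 = c i 1 * (p : ℤ_[p])^N := by
  simp [dd, Matrix.mul_apply, Fin.sum_univ_two]

lemma mul_dd_eq (N : ℕ) (c : Matrix (Fin 2) (Fin 2) ℤ_[p]) :
    c * dd p N = !![c 0 0, c 0 1 * (p:ℤ_[p])^N; c 1 0, c 1 1 * (p:ℤ_[p])^N] := by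
  ext i jj
  fin_cases i <;> fin_cases jj <;>
    simp [dd, Matrix.mul_apply, Matrix.vecMul, dotProduct, Fin.sum_univ_two]

lemma dd_mul_eq (N : ℕ) (m : Matrix (Fin 2) (Fin 2) ℤ_[p]) :
    dd p N * m = !![m 0 0, m 0 1; (p:ℤ_[p])^N * m 1 0, (p:ℤ_[p])^N * m 1 1] := by
  ext i jj
  fin_cases i <;> fin_cases jj <;>
    simp [dd, Matrix.mul_apply, Matrix.vecMul, dotProduct, Fin.sum_univ_two]

lemma det_dd (N : ℕ) : (dd p N).det = (p : ℤ_[p])^N := by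
  simp [dd, Matrix.det_fin_two_of]

lemma dd_factor {t s : ℕ} (h : t ≤ s) :
    dd p s = !![1, 0; 0, (p:ℤ_[p])^(s - t)] * dd p t := by
  have : (p:ℤ_[p])^(s-t) * (p:ℤ_[p])^t = (p:ℤ_[p])^s := by
    rw [← pow_add, Nat.sub_add_cancel h]
  rw [dd, dd, Matrix.mul_fin_two]
  simp [this]

/-- p is prime in ℤ_[p] -/
lemma unit_of_not_dvd {x : ℤ_[p]} (h : ¬ (p:ℤ_[p]) ∣ x) : IsUnit x := by
  rw [PadicInt.isUnit_iff]
  rcases lt_or_eq_of_le (PadicInt.norm_le_one x) with h' | h'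
  · exact absurd ((PadicInt.norm_lt_one_iff_dvd x).1 h') h
  · exact h'

lemma not_dvd_of_unit {x : ℤ_[p]} (h : IsUnit x) : ¬ (p:ℤ_[p]) ∣ x := fun hd =>
  PadicInt.prime_p.not_unit (isUnit_of_dvd_unit hd h)

lemma not_prim_iff {g : Matrix (Fin 2) (Fin 2) ℤ_[p]} :
    ¬ PrimitiveMat p g ↔ ∀ i j, (p:ℤ_[p]) ∣ g i j := by
  simp [PrimitiveMat]

lemma dvd_mul_left_all {a g : Matrix (Fin 2) (Fin 2) ℤ_[p]}
    (h : ∀ i j, (p:ℤ_[p]) ∣ g i j) (i j : Fin 2) : (p:ℤ_[p]) ∣ (a * g) i j := by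
  rw [Matrix.mul_apply]
  exact Finset.dvd_sum fun l _ => (h l j).mul_left _

lemma dvd_mul_right_all {a g : Matrix (Fin 2) (Fin 2) ℤ_[p]}
    (h : ∀ i j, (p:ℤ_[p]) ∣ g i j) (i j : Fin 2) : (p:ℤ_[p]) ∣ (g * a) i j := by
  rw [Matrix.mul_apply]
  exact Finset.dvd_sum fun l _ => (h i l).mul_right _

lemma prim_of_mul_left {a g : Matrix (Fin 2) (Fin 2) ℤ_[p]}
    (h : PrimitiveMat p (a * g)) : PrimitiveMat p g := by
  by_contra hg
  exact (not_prim_iff.mpr fun i j => dvd_mul_left_all (not_prim_iff.mp hg) i j) h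

lemma prim_of_mul_right {a g : Matrix (Fin 2) (Fin 2) ℤ_[p]}
    (h : PrimitiveMat p (g * a)) : PrimitiveMat p g := by
  by_contra hg
  exact (not_prim_iff.mpr fun i j => dvd_mul_right_all (not_prim_iff.mp hg) i j) h

lemma pow_neg_inj {a b : ℤ} (h : ((p:ℝ))^(-a) = (p:ℝ)^(-b)) : a = b := by
  have h1 : (1:ℝ) < p := by exact_mod_cast (Fact.out : p.Prime).one_lt
  have := zpow_right_injective₀ (by linarith) (by linarith) h
  omega

lemma norm_det_unit (u : (Matrix (Fin 2) (Fin 2) ℤ_[p])ˣ) :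
    ‖(↑u : Matrix (Fin 2) (Fin 2) ℤ_[p]).det‖ = 1 :=
  PadicInt.isUnit_iff.mp (Matrix.isUnits_det_units u)


/-- lower triangular unit -/
noncomputable def lowT (p : ℕ) [Fact p.Prime] (x : ℤ_[p]) : (Matrix (Fin 2) (Fin 2) ℤ_[p])ˣ where
  val := !![1, 0; x, 1]
  inv := !![1, 0; -x, 1]
  val_inv := by rw [Matrix.mul_fin_two, Matrix.one_fin_two]; norm_num
  inv_val := by rw [Matrix.mul_fin_two, Matrix.one_fin_two]; norm_num

noncomputable def upT (p : ℕ) [Fact p.Prime] (x : ℤ_[p]) : (Matrix (Fin 2) (Fin 2) ℤ_[p])ˣ where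
  val := !![1, x; 0, 1]
  inv := !![1, -x; 0, 1]
  val_inv := by rw [Matrix.mul_fin_two, Matrix.one_fin_two]; norm_num
  inv_val := by rw [Matrix.mul_fin_two, Matrix.one_fin_two]; norm_num

noncomputable def diagU (p : ℕ) [Fact p.Prime] (a b : ℤ_[p]ˣ) : (Matrix (Fin 2) (Fin 2) ℤ_[p])ˣ where
  val := !![(a:ℤ_[p]), 0; 0, (b:ℤ_[p])]
  inv := !![((a⁻¹:ℤ_[p]ˣ):ℤ_[p]), 0; 0, ((b⁻¹:ℤ_[p]ˣ):ℤ_[p])]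
  val_inv := by rw [Matrix.mul_fin_two, Matrix.one_fin_two]; norm_num
  inv_val := by rw [Matrix.mul_fin_two, Matrix.one_fin_two]; norm_num

noncomputable def swU (p : ℕ) [Fact p.Prime] : (Matrix (Fin 2) (Fin 2) ℤ_[p])ˣ where
  val := !![0, 1; 1, 0]
  inv := !![0, 1; 1, 0]
  val_inv := by rw [Matrix.mul_fin_two, Matrix.one_fin_two]; norm_num
  inv_val := by rw [Matrix.mul_fin_two, Matrix.one_fin_two]; norm_num

/-- Smith normal form when the (0,0) entry is a unit. -/
lemma snf00 {g : Matrix (Fin 2) (Fin 2) ℤ_[p]} (h00 : IsUnit (g 0 0)) {N : ℕ}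
    (hdet : ‖g.det‖ = (p:ℝ)^(-(N:ℤ))) :
    ∃ u v : (Matrix (Fin 2) (Fin 2) ℤ_[p])ˣ, u.val * dd p N * v.val = g := by
  obtain ⟨u0, hu0⟩ := h00
  set e : ℤ_[p] := g 1 1 - g 1 0 * ↑u0⁻¹ * g 0 1 with he_def
  have h1 : g 0 0 * (↑u0⁻¹:ℤ_[p]) = 1 := by rw [← hu0]; exact u0.mul_inv
  set L := lowT p (-(g 1 0 * ↑u0⁻¹)) with hL
  set Rm := upT p (-(↑u0⁻¹ * g 0 1)) with hR
  have key : L.val * g * Rm.val = !![g 0 0, 0; 0, e] := by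
    ext i jj
    fin_cases i <;> fin_cases jj <;>
      simp [hL, hR, lowT, upT, Matrix.mul_apply, Matrix.vecMul, dotProduct, Fin.sum_univ_two, he_def]
    · linear_combination (-(g 0 1)) * h1
    · linear_combination (-(g 1 0)) * h1
    · linear_combination (g 1 0 * (↑u0⁻¹:ℤ_[p]) * g 0 1) * h1
  have hdetL : (L.val).det = 1 := by simp [hL, lowT, Matrix.det_fin_two_of]
  have hdetR : (Rm.val).det = 1 := by simp [hR, upT, Matrix.det_fin_two_of]
  have hdg : g.det = g 0 0 * e := by
    have h := congrArg Matrix.det key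
    rw [Matrix.det_mul, Matrix.det_mul, hdetL, hdetR, Matrix.det_fin_two_of] at h
    simpa using h
  have hnorm_a : ‖g 0 0‖ = 1 := PadicInt.isUnit_iff.mp ⟨u0, hu0⟩
  have hne : ‖e‖ = (p:ℝ)^(-(N:ℤ)) := by
    rw [← hdet, hdg, norm_mul, hnorm_a, one_mul]
  have he0 : e ≠ 0 := by
    intro h
    rw [h, norm_zero] at hne
    have hp0 : (0:ℝ) < p := by exact_mod_cast (Fact.out : p.Prime).pos
    exact absurd hne.symm (zpow_ne_zero _ (ne_of_gt hp0))
  have hv : e.valuation = (N:ℤ) := by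
    have h := PadicInt.norm_eq_zpow_neg_valuation he0
    rw [hne] at h
    exact (pow_neg_inj h.symm)
  have hnat : e.valuation = N := by omega
  set ue := PadicInt.unitCoeff he0 with hue
  have hespec : e = (↑ue:ℤ_[p]) * (p:ℤ_[p])^N := by
    rw [hue, ← hnat]
    exact PadicInt.unitCoeff_spec he0
  set D := diagU p u0 ue with hDdef
  have hD : D.val * dd p N = !![g 0 0, 0; 0, e] := by
    rw [show D.val = !![(↑u0:ℤ_[p]),0;0,(↑ue:ℤ_[p])] from rfl, dd, Matrix.mul_fin_two,
      hespec, hu0]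
    norm_num
  refine ⟨L⁻¹ * D, Rm⁻¹, ?_⟩
  rw [Units.val_mul, mul_assoc _ D.val _, hD, ← key]
  simp [mul_assoc, Units.inv_mul_cancel_left, Units.mul_inv_cancel_right]

/-- Smith normal form for primitive 2x2 matrices over ℤ_p. -/
lemma snf {g : Matrix (Fin 2) (Fin 2) ℤ_[p]} (hg : PrimitiveMat p g) {N : ℕ}
    (hdet : ‖g.det‖ = (p:ℝ)^(-(N:ℤ))) :
    ∃ u v : (Matrix (Fin 2) (Fin 2) ℤ_[p])ˣ, u.val * dd p N * v.val = g := by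
  obtain ⟨i, jj, hij⟩ := hg
  have hunit : IsUnit (g i jj) := unit_of_not_dvd hij
  clear hij
  fin_cases i <;> fin_cases jj
  · exact snf00 hunit hdet
  · -- (0,1) : use g * sw
    have h00 : IsUnit ((g * (swU p).val) 0 0) := by
      simpa [swU, Matrix.mul_apply, Matrix.vecMul, dotProduct, Fin.sum_univ_two] using hunit
    have hdet' : ‖(g * (swU p).val).det‖ = (p:ℝ)^(-(N:ℤ)) := by
      rw [Matrix.det_mul, show ((swU p).val).det = -1 by simp [swU, Matrix.det_fin_two_of]]
      simpa using hdet
    obtain ⟨u, v, huv⟩ := snf00 h00 hdet'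
    refine ⟨u, v * (swU p)⁻¹, ?_⟩
    rw [Units.val_mul, ← mul_assoc, huv]
    simp [Units.mul_inv_cancel_right]
  · -- (1,0) : use sw * g
    have h00 : IsUnit (((swU p).val * g) 0 0) := by
      simpa [swU, Matrix.mul_apply, Matrix.vecMul, dotProduct, Fin.sum_univ_two] using hunit
    have hdet' : ‖((swU p).val * g).det‖ = (p:ℝ)^(-(N:ℤ)) := by
      rw [Matrix.det_mul, show ((swU p).val).det = -1 by simp [swU, Matrix.det_fin_two_of]]
      simpa using hdet
    obtain ⟨u, v, huv⟩ := snf00 h00 hdet'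
    refine ⟨(swU p)⁻¹ * u, v, ?_⟩
    rw [Units.val_mul, mul_assoc, mul_assoc, ← mul_assoc u.val, huv]
    simp [Units.inv_mul_cancel_left]
  · -- (1,1) : use sw * g * sw
    have h00 : IsUnit (((swU p).val * g * (swU p).val) 0 0) := by
      simpa [swU, Matrix.mul_apply, Matrix.vecMul, dotProduct, Fin.sum_univ_two] using hunit
    have hdet' : ‖((swU p).val * g * (swU p).val).det‖ = (p:ℝ)^(-(N:ℤ)) := by
      rw [Matrix.det_mul, Matrix.det_mul,
        show ((swU p).val).det = -1 by simp [swU, Matrix.det_fin_two_of]]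
      simpa using hdet
    obtain ⟨u, v, huv⟩ := snf00 h00 hdet'
    refine ⟨(swU p)⁻¹ * u, v * (swU p)⁻¹, ?_⟩
    rw [Units.val_mul, Units.val_mul]
    calc ((swU p)⁻¹.val * u.val) * dd p N * (v.val * (swU p)⁻¹.val)
        = (swU p)⁻¹.val * (u.val * dd p N * v.val) * (swU p)⁻¹.val := by
          noncomm_ring
      _ = g := by rw [huv]; simp [mul_assoc, Units.inv_mul_cancel_left, Units.mul_inv_cancel_right]

lemma mem_span_iff {x g : Matrix (Fin 2) (Fin 2) ℤ_[p]} :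
    x ∈ Ideal.span {g} ↔ ∃ a, a * g = x := Ideal.mem_span_singleton'

lemma span_unit_mul (u : (Matrix (Fin 2) (Fin 2) ℤ_[p])ˣ) (g : Matrix (Fin 2) (Fin 2) ℤ_[p]) :
    Ideal.span {u.val * g} = Ideal.span {g} := by
  apply le_antisymm
  · rw [Ideal.span_le, Set.singleton_subset_iff]
    exact mem_span_iff.mpr ⟨u.val, rfl⟩
  · rw [Ideal.span_le, Set.singleton_subset_iff]
    exact mem_span_iff.mpr ⟨u⁻¹.val, u.inv_mul_cancel_left g⟩

lemma row_reduce {c : Matrix (Fin 2) (Fin 2) ℤ_[p]}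
    (h : IsUnit (c 0 0) ∨ IsUnit (c 1 0)) :
    ∃ (q : Matrix (Fin 2) (Fin 2) ℤ_[p]) (α β : ℤ_[p]), q * c = !![1, α; 0, β] := by
  rcases h with ⟨w, hw⟩ | ⟨w, hw⟩
  · refine ⟨!![(↑w⁻¹:ℤ_[p]), 0; -(c 1 0) * ↑w⁻¹, 1], (↑w⁻¹:ℤ_[p]) * c 0 1,
      c 1 1 - c 1 0 * ↑w⁻¹ * c 0 1, ?_⟩
    have h2 : (↑w⁻¹:ℤ_[p]) * c 0 0 = 1 := by rw [← hw]; exact w.inv_mul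
    ext i jj
    fin_cases i <;> fin_cases jj <;>
      simp [Matrix.mul_apply, Matrix.vecMul, dotProduct, Fin.sum_univ_two] <;>
      first
        | exact hw
        | ring1
        | linear_combination (-(c 1 0)) * h2
        | linear_combination (c 1 0) * h2
  · refine ⟨!![0, (↑w⁻¹:ℤ_[p]); 1, -(c 0 0) * ↑w⁻¹], (↑w⁻¹:ℤ_[p]) * c 1 1,
      c 0 1 - c 0 0 * ↑w⁻¹ * c 1 1, ?_⟩
    have h2 : (↑w⁻¹:ℤ_[p]) * c 1 0 = 1 := by rw [← hw]; exact w.inv_mul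
    ext i jj
    fin_cases i <;> fin_cases jj <;>
      simp [Matrix.mul_apply, Matrix.vecMul, dotProduct, Fin.sum_univ_two] <;>
      first
        | exact hw
        | ring1
        | linear_combination (-(c 0 0)) * h2
        | linear_combination (c 0 0) * h2

lemma smul_one_eq (t : ℕ) :
    ((p:ℤ_[p])^t) • (1 : Matrix (Fin 2) (Fin 2) ℤ_[p])
      = !![(p:ℤ_[p])^t, 0; 0, (p:ℤ_[p])^t] := by
  ext i j
  fin_cases i <;> fin_cases j <;> simp [Matrix.one_apply]

/-- The key uniqueness lemma: a norm-p^t left ideal spanned by `dd t * v` containing the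
primitive element `x` is `span x + p^t · M`. -/
lemma unique_ideal {t : ℕ} (ht : 1 ≤ t) (v : (Matrix (Fin 2) (Fin 2) ℤ_[p])ˣ)
    {x : Matrix (Fin 2) (Fin 2) ℤ_[p]} (hx : PrimitiveMat p x)
    (hmem : x ∈ Ideal.span {dd p t * v.val}) :
    Ideal.span {dd p t * v.val}
      = Ideal.span {x} ⊔ Ideal.span {((p:ℤ_[p])^t) • (1 : Matrix (Fin 2) (Fin 2) ℤ_[p])} := by
  set P : Matrix (Fin 2) (Fin 2) ℤ_[p] := ((p:ℤ_[p])^t) • 1 with hP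
  obtain ⟨c, hc⟩ := mem_span_iff.mp hmem
  apply le_antisymm
  · -- span (dd t v) ≤ span x ⊔ span P
    rw [Ideal.span_le, Set.singleton_subset_iff]
    -- c has a unit in its first column
    have hcase : IsUnit (c 0 0) ∨ IsUnit (c 1 0) := by
      by_contra hcon
      push_neg at hcon
      have d1 : (p:ℤ_[p]) ∣ c 0 0 := by
        by_contra hd; exact hcon.1 (unit_of_not_dvd hd)
      have d2 : (p:ℤ_[p]) ∣ c 1 0 := by
        by_contra hd; exact hcon.2 (unit_of_not_dvd hd)
      have hpt : (p:ℤ_[p]) ∣ (p:ℤ_[p])^t := dvd_pow_self (p:ℤ_[p]) (by omega)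
      have hdall : ∀ i jj, (p:ℤ_[p]) ∣ (c * dd p t) i jj := by
        rw [mul_dd_eq]
        intro i jj
        fin_cases i <;> fin_cases jj <;> simp <;>
          first
            | exact d1
            | exact d2
            | exact Dvd.dvd.mul_left hpt _
      have hxall : ∀ i jj, (p:ℤ_[p]) ∣ x i jj := by
        have hx2 : (c * dd p t) * v.val = x := by rw [mul_assoc]; exact hc
        intro i jj
        rw [← hx2]
        exact dvd_mul_right_all hdall i jj
      exact (not_prim_iff.mpr hxall) hx
    obtain ⟨q, α, β, hq⟩ := row_reduce hcase
    set Y : Matrix (Fin 2) (Fin 2) ℤ_[p] := !![0, α; 0, β - 1] with hY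
    have hkey : dd p t = q * (c * dd p t) - ((p:ℤ_[p])^t) • Y := by
      rw [← mul_assoc, hq, hY]
      ext i jj
      fin_cases i <;> fin_cases jj <;>
        simp [dd, Matrix.mul_apply, Matrix.vecMul, dotProduct,
          Fin.sum_univ_two] <;> ring
    have hdecomp : dd p t * v.val = q * x + (-(Y * v.val)) * P := by
      have h1 : (-(Y * v.val)) * P = -(((p:ℤ_[p])^t) • (Y * v.val)) := by
        rw [hP, neg_mul]
        congr 1
        rw [mul_smul_comm, mul_one]
      have hx2 : (c * dd p t) * v.val = x := by rw [mul_assoc]; exact hc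
      rw [h1, hkey, sub_mul, smul_mul_assoc, mul_assoc, hx2]
      exact sub_eq_add_neg _ _
    rw [hdecomp]
    exact Submodule.add_mem _
      (Ideal.mem_sup_left (mem_span_iff.mpr ⟨q, rfl⟩))
      (Ideal.mem_sup_right (mem_span_iff.mpr ⟨-(Y * v.val), rfl⟩))
  · refine sup_le ?_ ?_
    · rw [Ideal.span_le, Set.singleton_subset_iff]; exact hmem
    · rw [Ideal.span_le, Set.singleton_subset_iff]
      refine mem_span_iff.mpr ⟨v⁻¹.val * !![(p:ℤ_[p])^t, 0; 0, 1], ?_⟩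
      have h1 : !![(p:ℤ_[p])^t, 0; 0, 1] * dd p t = P := by
        rw [dd, Matrix.mul_fin_two, hP, smul_one_eq]
        norm_num
      calc (v⁻¹.val * !![(p:ℤ_[p])^t, 0; 0, 1]) * (dd p t * v.val)
          = v⁻¹.val * ((!![(p:ℤ_[p])^t, 0; 0, 1] * dd p t) * v.val) := by
            rw [mul_assoc, ← mul_assoc !![(p:ℤ_[p])^t, 0; 0, 1]]
        _ = v⁻¹.val * (P * v.val) := by rw [h1]
        _ = P := by
            rw [hP, smul_mul_assoc, one_mul, mul_smul_comm, v.inv_mul]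

/-- The containment condition in terms of entrywise divisibilities. -/
lemma cond_iff (m : Matrix (Fin 2) (Fin 2) ℤ_[p]) (r s j k : ℕ) :
    (∃ c, ((p:ℤ_[p])^j) • (dd p r * m) = ((p:ℤ_[p])^k) • (c * dd p s)) ↔
      ((p:ℤ_[p])^k ∣ (p:ℤ_[p])^j * m 0 0 ∧ (p:ℤ_[p])^(k+s) ∣ (p:ℤ_[p])^j * m 0 1 ∧
       (p:ℤ_[p])^k ∣ (p:ℤ_[p])^(j+r) * m 1 0 ∧ (p:ℤ_[p])^(k+s) ∣ (p:ℤ_[p])^(j+r) * m 1 1) := by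
  constructor
  · rintro ⟨c, hc⟩
    rw [dd_mul_eq, mul_dd_eq] at hc
    have e00 := congrFun (congrFun hc 0) 0
    have e01 := congrFun (congrFun hc 0) 1
    have e10 := congrFun (congrFun hc 1) 0
    have e11 := congrFun (congrFun hc 1) 1
    simp [Matrix.smul_apply, smul_eq_mul] at e00 e01 e10 e11
    exact ⟨⟨c 0 0, by linear_combination e00⟩, ⟨c 0 1, by linear_combination e01⟩,
      ⟨c 1 0, by linear_combination e10⟩, ⟨c 1 1, by linear_combination e11⟩⟩
  · rintro ⟨⟨x00, h00⟩, ⟨x01, h01⟩, ⟨x10, h10⟩, ⟨x11, h11⟩⟩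
    refine ⟨!![x00, x01; x10, x11], ?_⟩
    rw [dd_mul_eq, mul_dd_eq]
    ext i jj
    fin_cases i <;> fin_cases jj <;>
      simp [Matrix.smul_apply, smul_eq_mul] <;>
      first
        | linear_combination h00
        | linear_combination h01
        | linear_combination h10
        | linear_combination h11

lemma unit_row_col (m : (Matrix (Fin 2) (Fin 2) ℤ_[p])ˣ) :
    (¬ (p:ℤ_[p]) ∣ m.val 0 0 ∨ ¬ (p:ℤ_[p]) ∣ m.val 0 1)
      ∧ (¬ (p:ℤ_[p]) ∣ m.val 0 1 ∨ ¬ (p:ℤ_[p]) ∣ m.val 1 1) := by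
  have hdet : IsUnit (m.val).det := Matrix.isUnits_det_units m
  have hnd : ¬ (p:ℤ_[p]) ∣ (m.val).det := not_dvd_of_unit hdet
  rw [Matrix.det_fin_two] at hnd
  constructor
  · by_contra hcon
    push_neg at hcon
    exact hnd (dvd_sub (hcon.1.mul_right _) (hcon.2.mul_right _))
  · by_contra hcon
    push_neg at hcon
    exact hnd (dvd_sub (hcon.2.mul_left _) (hcon.1.mul_right _))

lemma pow_le_of_dvd {a b : ℕ} (h : (p:ℤ_[p])^a ∣ (p:ℤ_[p])^b) : a ≤ b :=
  (pow_dvd_pow_iff PadicInt.prime_p.ne_zero PadicInt.prime_p.not_unit).mp h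

lemma pow_dvd_of_dvd_mul_not_dvd {a b : ℕ} {x : ℤ_[p]}
    (h : (p:ℤ_[p])^a ∣ (p:ℤ_[p])^b * x) (hx : ¬ (p:ℤ_[p]) ∣ x) : a ≤ b :=
  pow_le_of_dvd (PadicInt.prime_p.pow_dvd_of_dvd_mul_right _ hx h)

end Stmt5Aux

open Stmt5Aux in
/-- `Iy` plays the role of `I_{y,r}`, the unique left ideal of norm `p^r` containing the
primitive element `y`, and `Iz` that of `I_{z,s}`.  The containment
`p^j·I_{y,r} ⊆ p^k·I_{z,s}` holds iff `r, s ≥ s − j + k` and (when `s − j + k ≥ 0`)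
`I_{y,s−j+k} = I_{z,s−j+k}` — the latter expressed as the existence of a common ideal of
norm `p^{s−j+k}` containing both `y` and `z`. -/
theorem stmt5 (p : ℕ) [Fact p.Prime] (j k r s : ℕ)
    (y z : Matrix (Fin 2) (Fin 2) ℤ_[p])
    (hy : PrimitiveMat p y) (hz : PrimitiveMat p z)
    (hyr : (r : ℤ) ≤ y.det.valuation) (hzs : (s : ℤ) ≤ z.det.valuation)
    (Iy Iz : Ideal (Matrix (Fin 2) (Fin 2) ℤ_[p]))
    (hIy : hasNorm p Iy r ∧ y ∈ Iy) (hIz : hasNorm p Iz s ∧ z ∈ Iz) :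
    (∀ A ∈ Iy, ∃ B ∈ Iz, ((p : ℤ_[p]) ^ j) • A = ((p : ℤ_[p]) ^ k) • B) ↔
      ((s : ℤ) - j + k ≤ r ∧ k ≤ j ∧
        (0 ≤ (s : ℤ) - j + k →
          ∃ J : Ideal (Matrix (Fin 2) (Fin 2) ℤ_[p]),
            hasNorm p J ((s : ℤ) - j + k).toNat ∧ y ∈ J ∧ z ∈ J)) := by
  obtain ⟨⟨gy, hIyspan, hgynorm⟩, hyIy⟩ := hIy
  obtain ⟨⟨gz, hIzspan, hgznorm⟩, hzIz⟩ := hIz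
  subst hIyspan; subst hIzspan
  obtain ⟨ay, hay⟩ := mem_span_iff.mp hyIy
  obtain ⟨az, haz⟩ := mem_span_iff.mp hzIz
  have hgyprim : PrimitiveMat p gy := prim_of_mul_left (by rwa [← hay] at hy)
  have hgzprim : PrimitiveMat p gz := prim_of_mul_left (by rwa [← haz] at hz)
  obtain ⟨u1, v1, hsnf1⟩ := snf hgyprim hgynorm
  obtain ⟨u2, v2, hsnf2⟩ := snf hgzprim hgznorm
  set m : (Matrix (Fin 2) (Fin 2) ℤ_[p])ˣ := v1 * v2⁻¹ with hmdef
  have hmval : v1.val * v2⁻¹.val = m.val := by rw [hmdef, Units.val_mul]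
  have hmv : m.val * v2.val = v1.val := by
    rw [hmdef, Units.val_mul]
    exact Units.inv_mul_cancel_right _ v2
  have hG1 : gy = u1.val * ((dd p r * m.val) * v2.val) := by
    rw [← hsnf1, ← hmv]
    noncomm_ring
  -- Step 1 : reduce the containment to a single matrix equation
  have step1 : (∀ A ∈ Ideal.span {gy}, ∃ B ∈ Ideal.span {gz},
        ((p:ℤ_[p])^j) • A = ((p:ℤ_[p])^k) • B)
      ↔ ∃ c, ((p:ℤ_[p])^j) • (dd p r * m.val) = ((p:ℤ_[p])^k) • (c * dd p s) := by
    constructor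
    · intro hall
      obtain ⟨B, hB, hBeq⟩ := hall gy (Ideal.subset_span rfl)
      obtain ⟨b, hb⟩ := mem_span_iff.mp hB
      refine ⟨u1⁻¹.val * b * u2.val, ?_⟩
      have h1 : ((p:ℤ_[p])^j) • (u1.val * ((dd p r * m.val) * v2.val))
          = ((p:ℤ_[p])^k) • (b * (u2.val * (dd p s * v2.val))) := by
        rw [← hG1, ← mul_assoc u2.val, hsnf2, hb]
        exact hBeq
      have h2 := congrArg (fun W => u1⁻¹.val * W * v2⁻¹.val) h1
      simp only [mul_smul_comm, smul_mul_assoc, mul_assoc, Units.mul_inv, Units.inv_mul,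
        mul_one, one_mul, Units.inv_mul_cancel_left, Units.mul_inv_cancel_left] at h2
      simp only [mul_smul_comm, smul_mul_assoc, mul_assoc, Units.mul_inv, Units.inv_mul,
        mul_one, one_mul, Units.inv_mul_cancel_left, Units.mul_inv_cancel_left]
      exact h2
    · rintro ⟨c, hc⟩ A hA
      obtain ⟨a, ha⟩ := mem_span_iff.mp hA
      refine ⟨a * (u1.val * c * u2⁻¹.val) * gz, mem_span_iff.mpr ⟨_, rfl⟩, ?_⟩
      have hc' := congrArg (fun W => a * u1.val * W * v2.val) hc
      simp only [mul_smul_comm, smul_mul_assoc, mul_assoc, Units.mul_inv, Units.inv_mul,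
        mul_one, one_mul, Units.inv_mul_cancel_left, Units.mul_inv_cancel_left] at hc'
      rw [← ha, hG1, ← hsnf2]
      simp only [mul_smul_comm, smul_mul_assoc, mul_assoc, Units.mul_inv, Units.inv_mul,
        mul_one, one_mul, Units.inv_mul_cancel_left, Units.mul_inv_cancel_left]
      exact hc'
  rw [step1, cond_iff]
  constructor
  · rintro ⟨D1, D2, D3, D4⟩
    have hrow := (unit_row_col m).1
    have hcol := (unit_row_col m).2
    have hkj : k ≤ j := by
      rcases hrow with h | h
      · exact pow_dvd_of_dvd_mul_not_dvd D1 h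
      · have := pow_dvd_of_dvd_mul_not_dvd D2 h
        omega
    have hts : k + s ≤ j + r := by
      rcases hcol with h | h
      · have := pow_dvd_of_dvd_mul_not_dvd D2 h
        omega
      · exact pow_dvd_of_dvd_mul_not_dvd D4 h
    refine ⟨by omega, hkj, ?_⟩
    intro h0
    set t' := ((s:ℤ) - j + k).toNat with ht'def
    have htj : j + t' = k + s := by omega
    have htr : t' ≤ r := by omega
    have hts' : t' ≤ s := by omega
    have hm01 : (p:ℤ_[p])^t' ∣ m.val 0 1 := by
      have hD := D2
      rw [show k + s = j + t' by omega, pow_add] at hD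
      exact (mul_dvd_mul_iff_left (pow_ne_zero j PadicInt.prime_p.ne_zero)).mp hD
    obtain ⟨e01, he01⟩ := hm01
    have hpow : (p:ℤ_[p])^(r-t') * (p:ℤ_[p])^t' = (p:ℤ_[p])^r := by
      rw [← pow_add, Nat.sub_add_cancel htr]
    have hfac : dd p r * m.val
        = !![m.val 0 0, e01; (p:ℤ_[p])^r * m.val 1 0, (p:ℤ_[p])^(r-t') * m.val 1 1]
            * dd p t' := by
      rw [dd_mul_eq, mul_dd_eq]
      ext i jj
      fin_cases i <;> fin_cases jj <;> simp <;>
        first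
          | linear_combination he01
          | linear_combination -he01
          | linear_combination (m.val 1 1) * hpow
          | linear_combination (-(m.val 1 1)) * hpow
    refine ⟨Ideal.span {dd p t' * v2.val}, ⟨dd p t' * v2.val, rfl, ?_⟩, ?_, ?_⟩
    · rw [Matrix.det_mul, det_dd, norm_mul, norm_det_unit, mul_one,
        PadicInt.norm_p_pow]
    · refine mem_span_iff.mpr ⟨ay * u1.val *
        !![m.val 0 0, e01; (p:ℤ_[p])^r * m.val 1 0, (p:ℤ_[p])^(r-t') * m.val 1 1], ?_⟩
      rw [← hay, hG1, hfac]
      noncomm_ring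
    · refine mem_span_iff.mpr ⟨az * u2.val * !![1, 0; 0, (p:ℤ_[p])^(s-t')], ?_⟩
      rw [← haz, ← hsnf2, dd_factor hts']
      noncomm_ring
  · rintro ⟨h1, h2, h3⟩
    have hjr : k ≤ j + r := by omega
    have hksjr : k + s ≤ j + r := by omega
    have D1 : (p:ℤ_[p])^k ∣ (p:ℤ_[p])^j * m.val 0 0 :=
      (pow_dvd_pow _ h2).mul_right _
    have D3 : (p:ℤ_[p])^k ∣ (p:ℤ_[p])^(j+r) * m.val 1 0 :=
      (pow_dvd_pow _ hjr).mul_right _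
    have D4 : (p:ℤ_[p])^(k+s) ∣ (p:ℤ_[p])^(j+r) * m.val 1 1 :=
      (pow_dvd_pow _ hksjr).mul_right _
    refine ⟨D1, ?_, D3, D4⟩
    by_cases hks : k + s ≤ j
    · exact (pow_dvd_pow _ hks).mul_right _
    · -- the hard case : need the common ideal J
      have h0 : 0 ≤ (s:ℤ) - j + k := by omega
      obtain ⟨J, ⟨w, hJspan, hwnorm⟩, hyJ, hzJ⟩ := h3 h0
      subst hJspan
      set t' := ((s:ℤ) - j + k).toNat with ht'def
      have ht1 : 1 ≤ t' := by omega
      have htj : j + t' = k + s := by omega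
      have htr : t' ≤ r := by omega
      have hts' : t' ≤ s := by omega
      obtain ⟨byw, hbyw⟩ := mem_span_iff.mp hyJ
      obtain ⟨bzw, hbzw⟩ := mem_span_iff.mp hzJ
      have hwprim : PrimitiveMat p w := prim_of_mul_left (by rwa [← hbzw] at hz)
      obtain ⟨u3, v3, hsnf3⟩ := snf hwprim hwnorm
      have U1 : Ideal.span {dd p t' * v1.val}
          = Ideal.span {y} ⊔ Ideal.span {((p:ℤ_[p])^t') • (1 : Matrix (Fin 2) (Fin 2) ℤ_[p])} := by
        refine unique_ideal ht1 v1 hy (mem_span_iff.mpr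
          ⟨ay * u1.val * !![1, 0; 0, (p:ℤ_[p])^(r-t')], ?_⟩)
        rw [← hay, ← hsnf1, dd_factor htr]
        noncomm_ring
      have U2 : Ideal.span {dd p t' * v3.val}
          = Ideal.span {y} ⊔ Ideal.span {((p:ℤ_[p])^t') • (1 : Matrix (Fin 2) (Fin 2) ℤ_[p])} := by
        refine unique_ideal ht1 v3 hy (mem_span_iff.mpr ⟨byw * u3.val, ?_⟩)
        rw [← hbyw, ← hsnf3]
        noncomm_ring
      have U3 : Ideal.span {dd p t' * v3.val}
          = Ideal.span {z} ⊔ Ideal.span {((p:ℤ_[p])^t') • (1 : Matrix (Fin 2) (Fin 2) ℤ_[p])} := by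
        refine unique_ideal ht1 v3 hz (mem_span_iff.mpr ⟨bzw * u3.val, ?_⟩)
        rw [← hbzw, ← hsnf3]
        noncomm_ring
      have U4 : Ideal.span {dd p t' * v2.val}
          = Ideal.span {z} ⊔ Ideal.span {((p:ℤ_[p])^t') • (1 : Matrix (Fin 2) (Fin 2) ℤ_[p])} := by
        refine unique_ideal ht1 v2 hz (mem_span_iff.mpr
          ⟨az * u2.val * !![1, 0; 0, (p:ℤ_[p])^(s-t')], ?_⟩)
        rw [← haz, ← hsnf2, dd_factor hts']
        noncomm_ring
      have heq : Ideal.span {dd p t' * v1.val} = Ideal.span {dd p t' * v2.val} := by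
        rw [U1, ← U2, U3, U4]
      have hmem12 : dd p t' * v1.val ∈ Ideal.span {dd p t' * v2.val} := by
        rw [← heq]
        exact Ideal.subset_span rfl
      obtain ⟨c, hcc⟩ := mem_span_iff.mp hmem12
      have h5 : (c * (dd p t' * v2.val)) * v2⁻¹.val = c * dd p t' := by
        rw [← mul_assoc]
        exact Units.mul_inv_cancel_right _ v2
      have h6 : (dd p t' * v1.val) * v2⁻¹.val = dd p t' * m.val := by
        rw [mul_assoc, hmval]
      have hcm : c * dd p t' = dd p t' * m.val := by
        rw [← h5, ← h6, hcc]
      rw [mul_dd_eq, dd_mul_eq] at hcm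
      have e := congrFun (congrFun hcm 0) 1
      simp at e
      -- e : c 0 1 * p^t' = m.val 0 1
      refine ⟨c 0 1, ?_⟩
      rw [show k + s = j + t' by omega, pow_add]
      linear_combination (-((p:ℤ_[p])^j)) * e
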